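/- For ξ = ξ3 E3* + η3 A3* + (n/2)(2W1* − E1*) + (n'/2)(2W2* − E2*) with ξ3 < 0 and n, n' > 0, the stabilizer subalgebra g_ξ = {x ∈ g : ξ([x,y]) = 0 for all y ∈ g} equals span{W1, W2}. If instead ξ3 = 0, then E3 ∈ g_ξ, so dim g_ξ ≥ 3. -/

import Mathlib

open Matrix

attribute [local instance] LieRing.ofAssociativeRing

abbrev M6 := Matrix (Fin 6) (Fin 6) ℝ

noncomputable def E1 : M6 := !![0,0,0,1,0,0; 0,0,0,0,0,0; 0,0,0,0,0,0; 0,0,0,0,0,0; 0,0,0,0,0,0; 0,0,0,0,0,0]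
noncomputable def E2 : M6 := !![0,0,0,0,0,0; 0,0,0,0,1,0; 0,0,0,0,0,0; 0,0,0,0,0,0; 0,0,0,0,0,0; 0,0,0,0,0,0]
noncomputable def E3 : M6 := !![0,0,0,0,0,0; 0,0,0,0,0,0; 0,0,0,0,0,1; 0,0,0,0,0,0; 0,0,0,0,0,0; 0,0,0,0,0,0]
noncomputable def E31 : M6 := !![0,0,0,0,0,1; 0,0,0,0,0,0; 0,0,0,1,0,0; 0,0,0,0,0,0; 0,0,0,0,0,0; 0,0,0,0,0,0]
noncomputable def E32 : M6 := !![0,0,0,0,0,0; 0,0,0,0,0,1; 0,0,0,0,1,0; 0,0,0,0,0,0; 0,0,0,0,0,0; 0,0,0,0,0,0]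
noncomputable def A1 : M6 := !![(1/2),0,0,0,0,0; 0,0,0,0,0,0; 0,0,0,0,0,0; 0,0,0,(-1/2),0,0; 0,0,0,0,0,0; 0,0,0,0,0,0]
noncomputable def A2 : M6 := !![0,0,0,0,0,0; 0,(1/2),0,0,0,0; 0,0,0,0,0,0; 0,0,0,0,0,0; 0,0,0,0,(-1/2),0; 0,0,0,0,0,0]
noncomputable def A3 : M6 := !![0,0,0,0,0,0; 0,0,0,0,0,0; 0,0,(1/2),0,0,0; 0,0,0,0,0,0; 0,0,0,0,0,0; 0,0,0,0,0,(-1/2)]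
noncomputable def A31 : M6 := !![0,0,0,0,0,0; 0,0,0,0,0,0; 1,0,0,0,0,0; 0,0,0,0,0,-1; 0,0,0,0,0,0; 0,0,0,0,0,0]
noncomputable def A32 : M6 := !![0,0,0,0,0,0; 0,0,0,0,0,0; 0,1,0,0,0,0; 0,0,0,0,0,0; 0,0,0,0,0,-1; 0,0,0,0,0,0]
noncomputable def W1 : M6 := !![0,0,0,-1,0,0; 0,0,0,0,0,0; 0,0,0,0,0,0; 1,0,0,0,0,0; 0,0,0,0,0,0; 0,0,0,0,0,0]
noncomputable def W2 : M6 := !![0,0,0,0,0,0; 0,0,0,0,-1,0; 0,0,0,0,0,0; 0,0,0,0,0,0; 0,1,0,0,0,0; 0,0,0,0,0,0]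

noncomputable def gens : Set M6 := {E1, E2, E3, E31, E32, A1, A2, A3, A31, A32, W1, W2}

noncomputable def gLie : LieSubalgebra ℝ M6 := LieSubalgebra.lieSpan ℝ M6 gens

/-- The linear form ξ = ξ₃E₃* + η₃A₃* + (n/2)(2W₁* − E₁*) + (n'/2)(2W₂* − E₂*) on g,
written via the matrix entries (on g one has e₃ = x 2 5, a₃ = 2·(x 2 2),
k₁ = x 3 0, e₁ = x 0 3 + x 3 0, k₂ = x 4 1, e₂ = x 1 4 + x 4 1). -/
noncomputable def xiF (ξ3 η3 nn nn' : ℝ) (x : M6) : ℝ :=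
  ξ3 * x 2 5 + 2 * η3 * x 2 2 + (nn / 2) * (x 3 0 - x 0 3) + (nn' / 2) * (x 4 1 - x 1 4)

lemma xiF_add (ξ3 η3 nn nn' : ℝ) (x y : M6) :
    xiF ξ3 η3 nn nn' (x + y) = xiF ξ3 η3 nn nn' x + xiF ξ3 η3 nn nn' y := by
  simp only [xiF, Matrix.add_apply]; ring

lemma xiF_smul (ξ3 η3 nn nn' : ℝ) (c : ℝ) (x : M6) :
    xiF ξ3 η3 nn nn' (c • x) = c * xiF ξ3 η3 nn nn' x := by
  simp only [xiF, Matrix.smul_apply, smul_eq_mul]; ring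

lemma xiF_zero (ξ3 η3 nn nn' : ℝ) : xiF ξ3 η3 nn nn' (0 : M6) = 0 := by
  simp [xiF]

/-- The stabilizer g_ξ = {x ∈ g : ξ([x,y]) = 0 for all y ∈ g}. -/
noncomputable def stab (ξ3 η3 nn nn' : ℝ) : Submodule ℝ M6 where
  carrier := {x | x ∈ gLie ∧ ∀ y ∈ gLie, xiF ξ3 η3 nn nn' ⁅x, y⁆ = 0}
  zero_mem' := ⟨gLie.zero_mem, fun y _ => by rw [zero_lie]; exact xiF_zero _ _ _ _⟩
  add_mem' := fun hx hy => ⟨gLie.add_mem hx.1 hy.1, fun y hyg => by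
    rw [add_lie, xiF_add, hx.2 y hyg, hy.2 y hyg, add_zero]⟩
  smul_mem' := fun c x hx => ⟨gLie.smul_mem c hx.1, fun y hyg => by
    rw [smul_lie, xiF_smul, hx.2 y hyg, mul_zero]⟩


section Aux

/-! ### Entry-evaluation helper lemmas for 6-vectors -/

lemma v60 {α : Type*} (a b c d e f : α) : ![a,b,c,d,e,f] 0 = a := rfl
lemma v61 {α : Type*} (a b c d e f : α) : ![a,b,c,d,e,f] 1 = b := rfl
lemma v62 {α : Type*} (a b c d e f : α) : ![a,b,c,d,e,f] 2 = c := rfl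
lemma v63 {α : Type*} (a b c d e f : α) : ![a,b,c,d,e,f] 3 = d := rfl
lemma v64 {α : Type*} (a b c d e f : α) : ![a,b,c,d,e,f] 4 = e := rfl
lemma v65 {α : Type*} (a b c d e f : α) : ![a,b,c,d,e,f] 5 = f := rfl

lemma fm0 (h : 0 < 6) : (⟨0, h⟩ : Fin 6) = 0 := rfl
lemma fm1 (h : 1 < 6) : (⟨1, h⟩ : Fin 6) = 1 := rfl
lemma fm2 (h : 2 < 6) : (⟨2, h⟩ : Fin 6) = 2 := rfl
lemma fm3 (h : 3 < 6) : (⟨3, h⟩ : Fin 6) = 3 := rfl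
lemma fm4 (h : 4 < 6) : (⟨4, h⟩ : Fin 6) = 4 := rfl
lemma fm5 (h : 5 < 6) : (⟨5, h⟩ : Fin 6) = 5 := rfl

/-- Defining conditions of the 12-dimensional subspace spanned by the generators. -/
def Scond (x : M6) : Prop :=
  x 0 1 = 0 ∧ x 0 2 = 0 ∧ x 0 4 = 0 ∧ x 1 0 = 0 ∧ x 1 2 = 0 ∧ x 1 3 = 0 ∧
  x 3 1 = 0 ∧ x 3 2 = 0 ∧ x 3 4 = 0 ∧ x 4 0 = 0 ∧ x 4 2 = 0 ∧ x 4 3 = 0 ∧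
  x 5 0 = 0 ∧ x 5 1 = 0 ∧ x 5 2 = 0 ∧ x 5 3 = 0 ∧ x 5 4 = 0 ∧
  x 3 3 = -x 0 0 ∧ x 4 4 = -x 1 1 ∧ x 5 5 = -x 2 2 ∧
  x 2 3 = x 0 5 ∧ x 2 4 = x 1 5 ∧ x 3 5 = -x 2 0 ∧ x 4 5 = -x 2 1

noncomputable def Ssub : Submodule ℝ M6 where
  carrier := {x | Scond x}
  zero_mem' := by simp [Scond]
  add_mem' := by
    intro a b ha hb
    obtain ⟨p1,p2,p3,p4,p5,p6,p7,p8,p9,p10,p11,p12,p13,p14,p15,p16,p17,p18,p19,p20,p21,p22,p23,p24⟩ := ha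
    obtain ⟨q1,q2,q3,q4,q5,q6,q7,q8,q9,q10,q11,q12,q13,q14,q15,q16,q17,q18,q19,q20,q21,q22,q23,q24⟩ := hb
    refine ⟨?_,?_,?_,?_,?_,?_,?_,?_,?_,?_,?_,?_,?_,?_,?_,?_,?_,?_,?_,?_,?_,?_,?_,?_⟩ <;>
      simp only [Matrix.add_apply, p1,p2,p3,p4,p5,p6,p7,p8,p9,p10,p11,p12,p13,p14,p15,p16,p17,
        p18,p19,p20,p21,p22,p23,p24, q1,q2,q3,q4,q5,q6,q7,q8,q9,q10,q11,q12,q13,q14,q15,q16,q17,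
        q18,q19,q20,q21,q22,q23,q24] <;> ring
  smul_mem' := by
    intro c a ha
    obtain ⟨p1,p2,p3,p4,p5,p6,p7,p8,p9,p10,p11,p12,p13,p14,p15,p16,p17,p18,p19,p20,p21,p22,p23,p24⟩ := ha
    refine ⟨?_,?_,?_,?_,?_,?_,?_,?_,?_,?_,?_,?_,?_,?_,?_,?_,?_,?_,?_,?_,?_,?_,?_,?_⟩ <;>
      simp only [Matrix.smul_apply, smul_eq_mul, p1,p2,p3,p4,p5,p6,p7,p8,p9,p10,p11,p12,p13,p14,
        p15,p16,p17,p18,p19,p20,p21,p22,p23,p24] <;> ring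

set_option maxHeartbeats 2000000 in
noncomputable def SL : LieSubalgebra ℝ M6 :=
  { Ssub with
    lie_mem' := by
      intro x y hx hy
      obtain ⟨p1,p2,p3,p4,p5,p6,p7,p8,p9,p10,p11,p12,p13,p14,p15,p16,p17,p18,p19,p20,p21,p22,p23,p24⟩ := hx
      obtain ⟨q1,q2,q3,q4,q5,q6,q7,q8,q9,q10,q11,q12,q13,q14,q15,q16,q17,q18,q19,q20,q21,q22,q23,q24⟩ := hy
      show Scond _
      rw [Ring.lie_def]
      refine ⟨?_,?_,?_,?_,?_,?_,?_,?_,?_,?_,?_,?_,?_,?_,?_,?_,?_,?_,?_,?_,?_,?_,?_,?_⟩ <;>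
        simp only [Matrix.sub_apply, Matrix.mul_apply, Fin.sum_univ_six,
          p1,p2,p3,p4,p5,p6,p7,p8,p9,p10,p11,p12,p13,p14,p15,p16,p17,p18,p19,p20,p21,p22,p23,p24,
          q1,q2,q3,q4,q5,q6,q7,q8,q9,q10,q11,q12,q13,q14,q15,q16,q17,q18,q19,q20,q21,q22,q23,q24] <;>
        ring }




lemma gens_subset_SL : gens ⊆ (SL : Set M6) := by
  intro g hg
  simp only [gens, Set.mem_insert_iff, Set.mem_singleton_iff] at hg
  rcases hg with rfl|rfl|rfl|rfl|rfl|rfl|rfl|rfl|rfl|rfl|rfl|rfl <;>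
    show Scond _ <;>
    refine ⟨?_,?_,?_,?_,?_,?_,?_,?_,?_,?_,?_,?_,?_,?_,?_,?_,?_,?_,?_,?_,?_,?_,?_,?_⟩ <;>
    (simp only [E1, E2, E3, E31, E32, A1, A2, A3, A31, A32, W1, W2,
      Matrix.of_apply, v60, v61, v62, v63, v64, v65]; try norm_num)

lemma mem_Scond_of_mem_gLie {x : M6} (hx : x ∈ gLie) : Scond x :=
  (LieSubalgebra.lieSpan_le.mpr gens_subset_SL) hx
lemma xiF_bracket_W1 (a b c d : ℝ) (y : M6) : xiF a b c d ⁅W1, y⁆ = 0 := by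
  rw [Ring.lie_def]
  simp only [xiF, Matrix.sub_apply, Matrix.mul_apply, Fin.sum_univ_six, W1,
    Matrix.of_apply, v60, v61, v62, v63, v64, v65]
  ring

lemma xiF_bracket_W2 (a b c d : ℝ) (y : M6) : xiF a b c d ⁅W2, y⁆ = 0 := by
  rw [Ring.lie_def]
  simp only [xiF, Matrix.sub_apply, Matrix.mul_apply, Fin.sum_univ_six, W2,
    Matrix.of_apply, v60, v61, v62, v63, v64, v65]
  ring

lemma W1_mem_stab (a b c d : ℝ) : W1 ∈ stab a b c d :=
  ⟨LieSubalgebra.subset_lieSpan (by simp [gens]), fun y _ => xiF_bracket_W1 a b c d y⟩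

lemma W2_mem_stab (a b c d : ℝ) : W2 ∈ stab a b c d :=
  ⟨LieSubalgebra.subset_lieSpan (by simp [gens]), fun y _ => xiF_bracket_W2 a b c d y⟩

lemma E3_mem_stab (b c d : ℝ) : E3 ∈ stab 0 b c d := by
  refine ⟨LieSubalgebra.subset_lieSpan (by simp [gens]), fun y hy => ?_⟩
  obtain ⟨q1,q2,q3,q4,q5,q6,q7,q8,q9,q10,q11,q12,q13,q14,q15,q16,q17,q18,q19,q20,q21,q22,q23,q24⟩ :=
    mem_Scond_of_mem_gLie hy
  rw [Ring.lie_def]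
  simp only [xiF, Matrix.sub_apply, Matrix.mul_apply, Fin.sum_univ_six, E3,
    Matrix.of_apply, v60, v61, v62, v63, v64, v65]
  linear_combination (2*b) * q15
lemma v30 {α : Type*} (a b c : α) : ![a,b,c] 0 = a := rfl
lemma v31 {α : Type*} (a b c : α) : ![a,b,c] 1 = b := rfl
lemma v32 {α : Type*} (a b c : α) : ![a,b,c] 2 = c := rfl
lemma f3m0 (h : 0 < 3) : (⟨0, h⟩ : Fin 3) = 0 := rfl
lemma f3m1 (h : 1 < 3) : (⟨1, h⟩ : Fin 3) = 1 := rfl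
lemma f3m2 (h : 2 < 3) : (⟨2, h⟩ : Fin 3) = 2 := rfl

set_option maxHeartbeats 1000000 in
theorem stabilizer_of_xi (ξ3 η3 : ℝ) (n n' : ℤ) :
    (ξ3 < 0 → 0 < n → 0 < n' →
      stab ξ3 η3 (n : ℝ) (n' : ℝ) = Submodule.span ℝ ({W1, W2} : Set M6)) ∧
    (E3 ∈ stab 0 η3 (n : ℝ) (n' : ℝ) ∧
      3 ≤ Module.finrank ℝ ↥(stab 0 η3 (n : ℝ) (n' : ℝ))) := by
  have hgen : ∀ g ∈ gens, g ∈ gLie := fun g hg => LieSubalgebra.subset_lieSpan hg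
  refine ⟨?_, E3_mem_stab η3 (n : ℝ) (n' : ℝ), ?_⟩
  · intro hξ hn hn'
    have hξ0 : ξ3 ≠ 0 := ne_of_lt hξ
    have hn0 : (n : ℝ) ≠ 0 := Int.cast_ne_zero.mpr (by omega)
    have hn'0 : (n' : ℝ) ≠ 0 := Int.cast_ne_zero.mpr (by omega)
    apply le_antisymm
    · intro x hx
      obtain ⟨hxg, hxy⟩ := hx
      obtain ⟨p1,p2,p3,p4,p5,p6,p7,p8,p9,p10,p11,p12,p13,p14,p15,p16,p17,p18,p19,p20,p21,p22,p23,p24⟩ :=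
        mem_Scond_of_mem_gLie hxg
      have h1 := hxy E1 (hgen E1 (by simp [gens]))
      have h2 := hxy E2 (hgen E2 (by simp [gens]))
      have h3 := hxy E3 (hgen E3 (by simp [gens]))
      have h4 := hxy A1 (hgen A1 (by simp [gens]))
      have h5 := hxy A2 (hgen A2 (by simp [gens]))
      have h6 := hxy A3 (hgen A3 (by simp [gens]))
      have h7 := hxy A31 (hgen A31 (by simp [gens]))
      have h8 := hxy A32 (hgen A32 (by simp [gens]))
      have h9 := hxy E31 (hgen E31 (by simp [gens]))
      have h10 := hxy E32 (hgen E32 (by simp [gens]))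
      rw [Ring.lie_def] at h1 h2 h3 h4 h5 h6 h7 h8 h9 h10
      simp only [xiF, Matrix.sub_apply, Matrix.mul_apply, Fin.sum_univ_six,
        E1, E2, E3, E31, E32, A1, A2, A3, A31, A32,
        Matrix.of_apply, v60, v61, v62, v63, v64, v65] at h1 h2 h3 h4 h5 h6 h7 h8 h9 h10
      have e1 : x 0 0 = 0 := by
        have hh : (n : ℝ) * x 0 0 = 0 := by
          linear_combination (-1 : ℝ) * h1 + ((n : ℝ)/2) * p18
        exact (mul_eq_zero.mp hh).resolve_left hn0
      have e2 : x 1 1 = 0 := by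
        have hh : (n' : ℝ) * x 1 1 = 0 := by
          linear_combination (-1 : ℝ) * h2 + ((n' : ℝ)/2) * p19
        exact (mul_eq_zero.mp hh).resolve_left hn'0
      have e3 : x 2 2 = 0 := by
        have hh : ξ3 * x 2 2 = 0 := by
          linear_combination (1/2 : ℝ) * h3 + (ξ3/2) * p20 + η3 * p15
        exact (mul_eq_zero.mp hh).resolve_left hξ0
      have e4 : x 0 3 = -x 3 0 := by
        have hh : (n : ℝ) * (x 0 3 + x 3 0) = 0 := by linear_combination (2 : ℝ) * h4
        have := (mul_eq_zero.mp hh).resolve_left hn0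
        linarith
      have e5 : x 1 4 = -x 4 1 := by
        have hh : (n' : ℝ) * (x 1 4 + x 4 1) = 0 := by linear_combination (2 : ℝ) * h5
        have := (mul_eq_zero.mp hh).resolve_left hn'0
        linarith
      have e6 : x 2 5 = 0 := by
        have hh : ξ3 * x 2 5 = 0 := by linear_combination (-1 : ℝ) * h6
        exact (mul_eq_zero.mp hh).resolve_left hξ0
      have e7 : x 0 5 = 0 := by
        have hh : ξ3 * x 0 5 = 0 := by
          linear_combination (-1/2 : ℝ) * h7 + (-(ξ3)/2) * p21 + (-η3) * p2 +
            ((n : ℝ)/4) * p8 + ((n : ℝ)/4) * p13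
        exact (mul_eq_zero.mp hh).resolve_left hξ0
      have e8 : x 1 5 = 0 := by
        have hh : ξ3 * x 1 5 = 0 := by
          linear_combination (-1/2 : ℝ) * h8 + (-(ξ3)/2) * p22 + (-η3) * p5 +
            ((n' : ℝ)/4) * p11 + ((n' : ℝ)/4) * p14
        exact (mul_eq_zero.mp hh).resolve_left hξ0
      have e9 : x 2 0 = 0 := by
        have hh : ξ3 * x 2 0 = 0 := by
          linear_combination (1/2 : ℝ) * h9 + (ξ3/2) * p23 + η3 * p8 +
            ((n : ℝ)/4) * p2 + (-(n : ℝ)/4) * p16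
        exact (mul_eq_zero.mp hh).resolve_left hξ0
      have e10 : x 2 1 = 0 := by
        have hh : ξ3 * x 2 1 = 0 := by
          linear_combination (1/2 : ℝ) * h10 + (ξ3/2) * p24 + η3 * p11 +
            ((n' : ℝ)/4) * p5 + (-(n' : ℝ)/4) * p17
        exact (mul_eq_zero.mp hh).resolve_left hξ0
      have e7' : x 2 3 = 0 := p21.trans e7
      have e8' : x 2 4 = 0 := p22.trans e8
      have e9' : x 3 5 = 0 := by rw [p23, e9, neg_zero]
      have e10' : x 4 5 = 0 := by rw [p24, e10, neg_zero]
      have d33 : x 3 3 = 0 := by rw [p18, e1, neg_zero]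
      have d44 : x 4 4 = 0 := by rw [p19, e2, neg_zero]
      have d55 : x 5 5 = 0 := by rw [p20, e3, neg_zero]
      clear h1 h2 h3 h4 h5 h6 h7 h8 h9 h10 hxy hxg hgen
      refine Submodule.mem_span_pair.mpr ⟨x 3 0, x 4 1, ?_⟩
      ext i j
      fin_cases i <;> fin_cases j <;>
        simp only [fm0, fm1, fm2, fm3, fm4, fm5, Matrix.add_apply, Matrix.smul_apply,
          smul_eq_mul, W1, W2, Matrix.of_apply, v60, v61, v62, v63, v64, v65] <;>
        linarith
    · rw [Submodule.span_le]
      rintro z hz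
      simp only [Set.mem_insert_iff, Set.mem_singleton_iff] at hz
      rcases hz with rfl | rfl
      · exact W1_mem_stab ξ3 η3 (n : ℝ) (n' : ℝ)
      · exact W2_mem_stab ξ3 η3 (n : ℝ) (n' : ℝ)
  · have hE3 := E3_mem_stab η3 (n : ℝ) (n' : ℝ)
    have hW1 := W1_mem_stab 0 η3 (n : ℝ) (n' : ℝ)
    have hW2 := W2_mem_stab 0 η3 (n : ℝ) (n' : ℝ)
    have hli : LinearIndependent ℝ
        ![(⟨E3, hE3⟩ : stab 0 η3 (n : ℝ) (n' : ℝ)), ⟨W1, hW1⟩, ⟨W2, hW2⟩] := by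
      apply LinearIndependent.of_comp (stab 0 η3 (n : ℝ) (n' : ℝ)).subtype
      have hcomp : (stab 0 η3 (n : ℝ) (n' : ℝ)).subtype ∘
          ![(⟨E3, hE3⟩ : stab 0 η3 (n : ℝ) (n' : ℝ)), ⟨W1, hW1⟩, ⟨W2, hW2⟩] = ![E3, W1, W2] := by
        funext i; fin_cases i <;> rfl
      rw [hcomp]
      refine Fintype.linearIndependent_iff.mpr fun g hg => ?_
      simp only [Fin.sum_univ_three, v30, v31, v32] at hg
      have h0 := congrFun (congrFun hg 2) 5
      have h1 := congrFun (congrFun hg 3) 0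
      have h2 := congrFun (congrFun hg 4) 1
      simp only [Matrix.add_apply, Matrix.smul_apply, smul_eq_mul, E3, W1, W2,
        Matrix.of_apply, v60, v61, v62, v63, v64, v65, Matrix.zero_apply] at h0 h1 h2
      intro i
      fin_cases i <;> simp only [f3m0, f3m1, f3m2] <;> linarith
    simpa using hli.fintype_card_le_finrank
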